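/- Let F_q be a finite field and C an [n,k]_q linear code with generator matrix G. Define 𝔡 : S_n → ℕ by 𝔡(P) = min{ w(b) : b is a row of the reduced row echelon form of G·M_P }, where M_P is the permutation matrix of P. Then the minimum of 𝔡 over all permutations P ∈ S_n equals the minimum distance d(C) of C. -/

import Mathlib

/-- Hamming weight of a vector: the number of nonzero coordinates. -/
def hWt {F : Type*} [Zero F] [DecidableEq F] {n : ℕ} (v : Fin n → F) : ℕ :=
  (Finset.univ.filter fun i => v i ≠ 0).card

/-- `(i, j)` is a pivot position of `R`: the entry is nonzero and all entries
to its left in the same row vanish. -/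
def IsPivot {F : Type*} [Zero F] {k n : ℕ} (R : Matrix (Fin k) (Fin n) F)
    (i : Fin k) (j : Fin n) : Prop :=
  R i j ≠ 0 ∧ ∀ j' : Fin n, j' < j → R i j' = 0

/-- `R` is in reduced row echelon form. -/
def IsRREF {F : Type*} [Zero F] [One F] {k n : ℕ} (R : Matrix (Fin k) (Fin n) F) : Prop :=
  (∀ i i' : Fin k, i ≤ i' → R i = 0 → R i' = 0) ∧
  (∀ (i : Fin k) (j : Fin n), IsPivot R i j → R i j = 1) ∧
  (∀ (i i' : Fin k) (j j' : Fin n), i < i' → IsPivot R i j → IsPivot R i' j' → j < j') ∧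
  (∀ (i : Fin k) (j : Fin n), IsPivot R i j → ∀ i' : Fin k, i' ≠ i → R i' j = 0)

/-- Minimum distance of a linear code: minimal Hamming weight of a nonzero codeword. -/
noncomputable def minDist {F : Type*} [Field F] [DecidableEq F] {n : ℕ}
    (C : Submodule F (Fin n → F)) : ℕ :=
  sInf {d : ℕ | ∃ c ∈ C, c ≠ 0 ∧ hWt c = d}

open Matrix

lemma hWt_comp_perm {F : Type*} [Zero F] [DecidableEq F] {n : ℕ} (v : Fin n → F)
    (σ : Equiv.Perm (Fin n)) : hWt (fun j => v (σ j)) = hWt v := by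
  unfold hWt
  refine Finset.card_bij' (fun a _ => σ a) (fun b _ => σ.symm b) ?_ ?_ ?_ ?_ <;> simp

lemma hWt_smul {F : Type*} [Field F] [DecidableEq F] {n : ℕ} (v : Fin n → F)
    {a : F} (ha : a ≠ 0) : hWt (a • v) = hWt v := by
  unfold hWt
  congr 1
  apply Finset.filter_congr
  intro i _
  simp [ha]

lemma vecMul_eq_sum_smul {F : Type*} [Field F] {k n : ℕ} (x : Fin k → F)
    (G : Matrix (Fin k) (Fin n) F) : x ᵥ* G = ∑ i, x i • G i := by
  ext j
  simp [Matrix.vecMul, dotProduct, Finset.sum_apply]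

/-- The minimum over all permutations `P ∈ S_n` of the fitness
`𝔡(P) = min { w(b) : b a row of the RREF of G·M_P }` equals the minimum distance of `C`. -/
theorem sInf_fitness_eq_minDist
    {F : Type*} [Field F] [Fintype F] [DecidableEq F] {n k : ℕ} (hk : 0 < k)
    (C : Submodule F (Fin n → F)) (G : Matrix (Fin k) (Fin n) F)
    (hGli : LinearIndependent F (fun i : Fin k => G i))
    (hGspan : Submodule.span F (Set.range fun i : Fin k => G i) = C) :
    sInf {d : ℕ | ∃ (P : Equiv.Perm (Fin n)) (R : Matrix (Fin k) (Fin n) F),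
        IsRREF R ∧
        (∃ A : Matrix (Fin k) (Fin k) F, IsUnit A ∧ R = A * (G * P.permMatrix F)) ∧
        d = sInf {w : ℕ | ∃ i : Fin k, hWt (R i) = w}} = minDist C := by
  classical
  obtain ⟨k', rfl⟩ : ∃ k', k = k' + 1 := ⟨k - 1, (Nat.succ_pred_eq_of_pos hk).symm⟩
  -- membership in C
  have hmemC : ∀ x : Fin (k' + 1) → F, x ᵥ* G ∈ C := by
    intro x
    rw [← hGspan, vecMul_eq_sum_smul]
    exact Submodule.sum_mem _ fun i _ =>
      Submodule.smul_mem _ _ (Submodule.subset_span ⟨i, rfl⟩)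
  have hGinj : ∀ x : Fin (k' + 1) → F, x ᵥ* G = 0 → x = 0 := by
    intro x hx
    funext i
    exact Fintype.linearIndependent_iff.mp hGli x (by rw [← vecMul_eq_sum_smul, hx]) i
  have hminle : ∀ c ∈ C, c ≠ 0 → minDist C ≤ hWt c := fun c hc h0 =>
    Nat.sInf_le ⟨c, hc, h0, rfl⟩
  -- lower bound: every fitness value is ≥ minDist C
  have hlow : ∀ d' ∈ {d : ℕ | ∃ (P : Equiv.Perm (Fin n)) (R : Matrix (Fin (k'+1)) (Fin n) F),
        IsRREF R ∧
        (∃ A : Matrix (Fin (k'+1)) (Fin (k'+1)) F, IsUnit A ∧ R = A * (G * P.permMatrix F)) ∧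
        d = sInf {w : ℕ | ∃ i : Fin (k'+1), hWt (R i) = w}}, minDist C ≤ d' := by
    rintro d' ⟨P, R, -, ⟨A, hA, rfl⟩, rfl⟩
    have hrow : ∀ i, (A * (G * P.permMatrix F)) i = fun j => ((A i) ᵥ* G) (P.symm j) := by
      intro i
      funext j
      simp [Equiv.Perm.permMatrix, PEquiv.mul_toMatrix_toPEquiv, Matrix.mul_apply,
        Matrix.vecMul, dotProduct, Matrix.submatrix_apply]
    have hge : ∀ i, minDist C ≤ hWt ((A * (G * P.permMatrix F)) i) := by
      intro i
      rw [hrow i, hWt_comp_perm ((A i) ᵥ* G) P.symm]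
      refine hminle _ (hmemC _) ?_
      intro h0
      have hAi : A i = 0 := hGinj _ h0
      exact (Matrix.linearIndependent_rows_iff_isUnit.mpr hA).ne_zero i hAi
    have hne : {w : ℕ | ∃ i : Fin (k'+1), hWt ((A * (G * P.permMatrix F)) i) = w}.Nonempty :=
      ⟨_, 0, rfl⟩
    obtain ⟨i, hi⟩ := Nat.sInf_mem hne
    rw [← hi]
    exact hge i
  -- minimum weight codeword
  have hCne : {d : ℕ | ∃ c ∈ C, c ≠ 0 ∧ hWt c = d}.Nonempty := by
    refine ⟨hWt (G 0), G 0, ?_, hGli.ne_zero 0, rfl⟩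
    rw [← hGspan]
    exact Submodule.subset_span ⟨0, rfl⟩
  obtain ⟨c, hcC, hc0, hcd⟩ := Nat.sInf_mem hCne
  have hkn : k' + 1 ≤ n := by
    have := hGli.fintype_card_le_finrank
    simpa using this
  -- the coefficient vector of c
  obtain ⟨xc, hxc⟩ : ∃ x : Fin (k'+1) → F, x ᵥ* G = c := by
    have : c ∈ Submodule.span F (Set.range fun i : Fin (k'+1) => G i) := by
      rw [hGspan]; exact hcC
    obtain ⟨g, hg⟩ := (Submodule.mem_span_range_iff_exists_fun F).mp this
    exact ⟨g, by rw [vecMul_eq_sum_smul]; exact hg⟩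
  have hxc0 : xc ≠ 0 := fun h => hc0 (by rw [← hxc, h]; simp)
  -- the columns where c vanishes
  set T : Finset (Fin n) := Finset.univ.filter (fun j => c j = 0) with hT
  set M' : Matrix (Fin (k'+1)) {j // j ∈ T} F := Matrix.of (fun i j => G i j.1) with hM'
  -- c has minimal weight; any codeword vanishing on T is a multiple of c
  have hmult : ∀ u ∈ C, (∀ j, c j = 0 → u j = 0) → ∃ a : F, u = a • c := by
    intro u huC hvan
    by_cases hu : u = 0
    · exact ⟨0, by simp [hu]⟩
    obtain ⟨j1, hj1⟩ : ∃ j1, u j1 ≠ 0 := Function.ne_iff.mp hu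
    have hcj1 : c j1 ≠ 0 := fun h => hj1 (hvan j1 h)
    set w : Fin n → F := u - (u j1 * (c j1)⁻¹) • c with hw
    have hwC : w ∈ C := Submodule.sub_mem _ huC (Submodule.smul_mem _ _ hcC)
    have hwj1 : w j1 = 0 := by
      simp only [hw, Pi.sub_apply, Pi.smul_apply, smul_eq_mul]
      field_simp
      ring
    have hwvan : ∀ j, c j = 0 → w j = 0 := by
      intro j hj
      simp [hw, hvan j hj, hj]
    have hw0 : w = 0 := by
      by_contra hwne
      have h1 : minDist C ≤ hWt w := hminle w hwC hwne
      have h2 : hWt w < hWt c := by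
        apply Finset.card_lt_card
        constructor
        · intro j hj
          simp only [Finset.mem_filter, Finset.mem_univ, true_and] at hj ⊢
          intro hcj
          exact hj (hwvan j hcj)
        · intro hsub
          have : j1 ∈ Finset.univ.filter (fun i => w i ≠ 0) :=
            hsub (by simp [hcj1])
          simp only [Finset.mem_filter] at this
          exact this.2 hwj1
      have h3 : hWt c = minDist C := hcd
      omega
    refine ⟨u j1 * (c j1)⁻¹, ?_⟩
    have := sub_eq_zero.mp hw0
    exact this
  -- kernel of the transposed submatrix
  have hker : LinearMap.ker (M'ᵀ.mulVecLin) = Submodule.span F {xc} := by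
    apply le_antisymm
    · intro x hx
      have hvan : ∀ j, c j = 0 → (x ᵥ* G) j = 0 := by
        intro j hj
        have h1 : (x ᵥ* M') ⟨j, by simp [hT, hj]⟩ = 0 := by
          rw [← Matrix.mulVec_transpose]
          exact congrFun (LinearMap.mem_ker.mp hx) _
        simpa [hM', Matrix.vecMul, dotProduct] using h1
      obtain ⟨a, ha⟩ := hmult (x ᵥ* G) (hmemC x) hvan
      have : x = a • xc := by
        have h2 : (x - a • xc) ᵥ* G = 0 := by
          rw [Matrix.sub_vecMul, Matrix.smul_vecMul, hxc, ha, sub_self]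
        have := hGinj _ h2
        rwa [sub_eq_zero] at this
      rw [this]
      exact Submodule.smul_mem _ _ (Submodule.subset_span rfl)
    · rw [Submodule.span_singleton_le_iff_mem, LinearMap.mem_ker]
      rw [Matrix.mulVecLin_apply, Matrix.mulVec_transpose]
      funext j
      have : (xc ᵥ* G) j.1 = 0 := by
        rw [hxc]
        have := j.2
        simp only [hT, Finset.mem_filter] at this
        exact this.2
      simpa [hM', Matrix.vecMul, dotProduct] using this
  -- rank computation
  have hkerrank : Module.finrank F (LinearMap.ker (M'ᵀ.mulVecLin)) = 1 := by
    rw [hker]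
    exact finrank_span_singleton hxc0
  have hrankM : M'.rank = k' := by
    have h := LinearMap.finrank_range_add_finrank_ker (M'ᵀ.mulVecLin)
    rw [hkerrank, Module.finrank_fin_fun] at h
    have h2 : M'ᵀ.rank = k' := by
      unfold Matrix.rank
      omega
    rw [← Matrix.rank_transpose]
    exact h2
  have hspanS : Module.finrank F (Submodule.span F (Set.range M'ᵀ)) = k' := by
    rw [show Set.range M'ᵀ = Set.range M'.col from rfl, ← Matrix.rank_eq_finrank_span_cols]
    exact hrankM
  -- choose an independent subset of the columns over T
  obtain ⟨t, hts, htspan, htli⟩ := exists_linearIndependent F (Set.range M'ᵀ)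
  haveI : Fintype t := (Set.Finite.subset (Set.finite_range _) hts).fintype
  have hcardt : Fintype.card t = k' := by
    have h := finrank_span_set_eq_card htli
    rw [htspan, hspanS] at h
    rw [← Set.toFinset_card]
    exact h.symm
  set e : Fin k' ≃ t := (Fintype.equivFinOfCardEq hcardt).symm with he
  have hpickex : ∀ v : t, ∃ j : Fin n, c j = 0 ∧ (fun i => G i j) = (v : Fin (k'+1) → F) := by
    intro v
    obtain ⟨jT, hj⟩ := hts v.2
    refine ⟨jT.1, ?_, ?_⟩
    · have := jT.2
      simp only [hT, Finset.mem_filter] at this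
      exact this.2
    · rw [← hj]
      rfl
  choose pick hpick0 hpick1 using hpickex
  set ι' : Fin k' → Fin n := fun a => pick (e a) with hι'
  have hcol' : (fun a : Fin k' => (fun i => G i (ι' a))) = fun a => ((e a : Fin (k'+1) → F)) := by
    funext a
    exact hpick1 (e a)
  have hli' : LinearIndependent F (fun a : Fin k' => (fun i => G i (ι' a))) := by
    rw [hcol']
    exact htli.comp e e.injective
  have hrange' : Set.range (fun a : Fin k' => (fun i => G i (ι' a))) = t := by
    rw [hcol']
    have : (fun a : Fin k' => ((e a : Fin (k'+1) → F))) = Subtype.val ∘ e := rfl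
    rw [this, Set.range_comp, Equiv.range_eq_univ, Set.image_univ, Subtype.range_coe]
  -- find the extra column j0
  have hj0ex : ∃ j0 : Fin n, (fun i => G i j0) ∉ Submodule.span F t := by
    by_contra h
    push_neg at h
    have hle : Submodule.span F (Set.range Gᵀ) ≤ Submodule.span F t := by
      rw [Submodule.span_le]
      rintro _ ⟨j, rfl⟩
      exact h j
    have h2 : Module.finrank F (Submodule.span F (Set.range Gᵀ)) = k' + 1 := by
      rw [show Set.range Gᵀ = Set.range G.col from rfl, ← Matrix.rank_eq_finrank_span_cols]
      have h3 : Gᵀ.rank = k' + 1 := by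
        rw [Matrix.rank_eq_finrank_span_cols, Matrix.col_def, Matrix.transpose_transpose]
        have := finrank_span_eq_card hGli
        simpa using this
      rw [← Matrix.rank_transpose]
      exact h3
    have h4 := Submodule.finrank_mono hle
    rw [h2] at h4
    have h5 : Module.finrank F (Submodule.span F t) = k' := by
      rw [htspan]
      exact hspanS
    omega
  obtain ⟨j0, hj0⟩ := hj0ex
  have hspan_t_s : Submodule.span F t = Submodule.span F (Set.range M'ᵀ) := htspan
  have hcj0 : c j0 ≠ 0 := by
    intro h
    apply hj0
    rw [hspan_t_s]
    apply Submodule.subset_span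
    exact ⟨⟨j0, by simp [hT, h]⟩, rfl⟩
  -- the information set
  set ι : Fin (k'+1) → Fin n := Fin.cons j0 ι' with hι
  have hcols : LinearIndependent F (fun a : Fin (k'+1) => (fun i => G i (ι a))) := by
    have heq : (fun a : Fin (k'+1) => (fun i => G i (ι a)))
        = Fin.cons (fun i => G i j0) (fun a => fun i => G i (ι' a)) := by
      funext a
      refine Fin.cases ?_ ?_ a
      · simp [hι]
      · intro b
        simp [hι]
    rw [heq, linearIndependent_fin_cons]
    refine ⟨hli', ?_⟩
    rw [hrange']
    exact hj0
  have hιinj : Function.Injective ι := by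
    intro a b hab
    exact hcols.injective (by rw [hab])
  have hιT : ∀ b : Fin k', c (ι (Fin.succ b)) = 0 := by
    intro b
    have : ι (Fin.succ b) = ι' b := by simp [hι]
    rw [this]
    exact hpick0 (e b)
  have hιz : ι 0 = j0 := by simp [hι]
  -- the invertible submatrix
  set B : Matrix (Fin (k'+1)) (Fin (k'+1)) F := Matrix.of (fun i a => G i (ι a)) with hB
  have hBunit : IsUnit B := by
    rw [← Matrix.linearIndependent_cols_iff_isUnit]
    exact hcols
  have hdet : IsUnit B.det := (Matrix.isUnit_iff_isUnit_det B).mp hBunit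
  -- the permutation
  set em : Fin (k'+1) → Fin n := fun a => Fin.castLE hkn a with hem
  set eqv : {x : Fin n // x ∈ Set.range ι} ≃ {x : Fin n // (x : ℕ) < k'+1} :=
    (Equiv.ofInjective ι hιinj).symm.trans
      ⟨fun a => ⟨em a, a.isLt⟩, fun x => ⟨x.1, x.2⟩,
        fun a => by simp [hem], fun x => by ext; simp [hem]⟩ with heqv
  set σ : Equiv.Perm (Fin n) := eqv.extendSubtype with hσdef
  have hσ : ∀ a, σ (ι a) = em a := by
    intro a
    have h1 : ι a ∈ Set.range ι := ⟨a, rfl⟩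
    rw [hσdef, Equiv.extendSubtype_apply_of_mem eqv (ι a) h1]
    have h2 : (Equiv.ofInjective ι hιinj).symm ⟨ι a, h1⟩ = a := by
      apply (Equiv.ofInjective ι hιinj).injective
      simp [Equiv.apply_ofInjective_symm]
    simp only [heqv, Equiv.trans_apply, h2, Equiv.coe_fn_mk]
  have hσsymm : ∀ a, σ.symm (em a) = ι a := by
    intro a
    rw [← hσ a, Equiv.symm_apply_apply]
  -- the RREF matrix
  set R : Matrix (Fin (k'+1)) (Fin n) F := B⁻¹ * (G * σ.permMatrix F) with hR
  have hrowR : ∀ i, R i = fun j => ((B⁻¹ i) ᵥ* G) (σ.symm j) := by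
    intro i
    funext j
    simp [hR, Equiv.Perm.permMatrix, PEquiv.mul_toMatrix_toPEquiv, Matrix.mul_apply,
      Matrix.vecMul, dotProduct, Matrix.submatrix_apply]
  have hvmB : ∀ (x : Fin (k'+1) → F) (a : Fin (k'+1)), (x ᵥ* G) (ι a) = (x ᵥ* B) a := by
    intro x a
    simp [Matrix.vecMul, dotProduct, hB]
  have hRem : ∀ i a, R i (em a) = if i = a then (1 : F) else 0 := by
    intro i a
    have h1 : R i (em a) = ((B⁻¹ i) ᵥ* G) (ι a) := by
      rw [hrowR i]
      simp only []
      rw [hσsymm a]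
    rw [h1, hvmB]
    have h2 : (B⁻¹ i) ᵥ* B = fun a => (B⁻¹ * B) i a := by
      funext b
      simp [Matrix.mul_apply, Matrix.vecMul, dotProduct]
    rw [h2]
    rw [Matrix.nonsing_inv_mul B hdet]
    simp [Matrix.one_apply]
  have hRemem : ∀ i : Fin (k'+1), R i (em i) = 1 := fun i => by rw [hRem i i, if_pos rfl]
  have hemval : ∀ a : Fin (k'+1), ((em a : Fin n) : ℕ) = (a : ℕ) := fun a => rfl
  have hemeq : ∀ (j : Fin n) (hj : (j : ℕ) < k'+1), j = em ⟨(j : ℕ), hj⟩ := by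
    intro j hj
    apply Fin.ext
    rfl
  -- pivot characterization
  have hpiv : ∀ (i : Fin (k'+1)) (j : Fin n), IsPivot R i j ↔ j = em i := by
    intro i j
    constructor
    · rintro ⟨hne, hleft⟩
      rcases lt_trichotomy j (em i) with h | h | h
      · exfalso
        have hj : (j : ℕ) < k'+1 := by
          have : (j : ℕ) < (i : ℕ) := h
          omega
        apply hne
        rw [hemeq j hj, hRem]
        rw [if_neg]
        intro hcon
        have : (i : ℕ) = (j : ℕ) := congrArg Fin.val hcon
        have h2 : (j : ℕ) < (i : ℕ) := h
        omega
      · exact h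
      · exfalso
        have := hleft (em i) h
        rw [hRemem i] at this
        exact one_ne_zero this
    · rintro rfl
      refine ⟨by rw [hRemem i]; exact one_ne_zero, ?_⟩
      intro j' hj'
      have hj : (j' : ℕ) < k'+1 := by
        have : (j' : ℕ) < (i : ℕ) := hj'
        omega
      rw [hemeq j' hj, hRem]
      rw [if_neg]
      intro hcon
      have : (i : ℕ) = (j' : ℕ) := congrArg Fin.val hcon
      have h2 : (j' : ℕ) < (i : ℕ) := hj'
      omega
  have hRREF : IsRREF R := by
    refine ⟨?_, ?_, ?_, ?_⟩
    · intro i i' _ h0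
      exfalso
      have := congrFun h0 (em i)
      rw [hRemem i] at this
      exact one_ne_zero this
    · intro i j hp
      rw [(hpiv i j).mp hp]
      exact hRemem i
    · intro i i' j j' hii' hp hp'
      rw [(hpiv i j).mp hp, (hpiv i' j').mp hp']
      exact hii'
    · intro i j hp i' hi'
      rw [(hpiv i j).mp hp, hRem]
      exact if_neg hi'
  -- every row has weight ≥ minDist C, and row 0 has weight exactly minDist C
  have hWtrow : ∀ i, hWt (R i) = hWt ((B⁻¹ i) ᵥ* G) := by
    intro i
    rw [hrowR i]
    exact hWt_comp_perm _ σ.symm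
  have hrownz : ∀ i, (B⁻¹ i) ᵥ* G ≠ 0 := by
    intro i h0
    have h1 := hRemem i
    rw [hrowR i] at h1
    simp only [] at h1
    rw [h0] at h1
    simp at h1
  have hge : ∀ i, minDist C ≤ hWt (R i) := by
    intro i
    rw [hWtrow i]
    exact hminle _ (hmemC _) (hrownz i)
  -- row 0
  set z : Fin n → F := (c j0)⁻¹ • c with hz
  have hzC : z ∈ C := Submodule.smul_mem _ _ hcC
  obtain ⟨xz, hxz⟩ : ∃ x : Fin (k'+1) → F, x ᵥ* G = z := by
    have : z ∈ Submodule.span F (Set.range fun i : Fin (k'+1) => G i) := by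
      rw [hGspan]; exact hzC
    obtain ⟨g, hg⟩ := (Submodule.mem_span_range_iff_exists_fun F).mp this
    exact ⟨g, by rw [vecMul_eq_sum_smul]; exact hg⟩
  have hzι : ∀ a : Fin (k'+1), z (ι a) = if (0 : Fin (k'+1)) = a then (1 : F) else 0 := by
    intro a
    refine Fin.cases ?_ ?_ a
    · rw [if_pos rfl, hιz]
      simp [hz, inv_mul_cancel₀ hcj0]
    · intro b
      rw [if_neg (Fin.succ_ne_zero b).symm]
      simp [hz, hιT b]
  have hrow0 : (B⁻¹ 0) ᵥ* G = z := by
    have hx' : (B⁻¹ 0 - xz) ᵥ* B = 0 := by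
      funext a
      rw [Matrix.sub_vecMul]
      have h1 : ((B⁻¹ 0) ᵥ* B) a = if (0 : Fin (k'+1)) = a then (1:F) else 0 := by
        rw [← hvmB]
        have h2 : ((B⁻¹ 0) ᵥ* G) (ι a) = R 0 (em a) := by
          rw [hrowR 0]
          simp only []
          rw [hσsymm a]
        rw [h2, hRem]
      have h3 : (xz ᵥ* B) a = if (0 : Fin (k'+1)) = a then (1:F) else 0 := by
        rw [← hvmB, hxz]
        exact hzι a
      simp [h1, h3]
    have hinj := Matrix.vecMul_injective_iff_isUnit.mpr hBunit
    have h0 : (B⁻¹ 0 - xz) ᵥ* B = (0 : Fin (k'+1) → F) ᵥ* B := by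
      rw [hx', Matrix.zero_vecMul]
    have := hinj h0
    have h4 : B⁻¹ 0 = xz := by
      have := sub_eq_zero.mp this
      exact this
    rw [h4, hxz]
  have hrow0wt : hWt (R 0) = minDist C := by
    rw [hWtrow 0, hrow0, hz]
    rw [hWt_smul c (inv_ne_zero hcj0)]  -- weight of scalar multiple
    exact hcd
  -- the fitness of σ is exactly minDist C
  have hfit : sInf {w : ℕ | ∃ i : Fin (k'+1), hWt (R i) = w} = minDist C := by
    apply le_antisymm
    · exact Nat.sInf_le ⟨0, hrow0wt⟩
    · obtain ⟨i, hi⟩ := Nat.sInf_mem (⟨minDist C, 0, hrow0wt⟩ :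
        {w : ℕ | ∃ i : Fin (k'+1), hWt (R i) = w}.Nonempty)
      rw [← hi]
      exact hge i
  have hmem : minDist C ∈ {d : ℕ | ∃ (P : Equiv.Perm (Fin n))
      (R : Matrix (Fin (k'+1)) (Fin n) F),
      IsRREF R ∧
      (∃ A : Matrix (Fin (k'+1)) (Fin (k'+1)) F, IsUnit A ∧ R = A * (G * P.permMatrix F)) ∧
      d = sInf {w : ℕ | ∃ i : Fin (k'+1), hWt (R i) = w}} := by
    refine ⟨σ, R, hRREF, ⟨B⁻¹, ?_, hR⟩, hfit.symm⟩
    exact Matrix.isUnit_nonsing_inv_iff.mpr hBunit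
  apply le_antisymm
  · exact Nat.sInf_le hmem
  · exact hlow _ (Nat.sInf_mem ⟨minDist C, hmem⟩)
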